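/- Let θ ∈ ℝ and let a, b, A, B : ℂ → ℂ satisfy the symmetries under conjugation so that for a real λ the matrices J₁ = [[1, (b/a) e^{-2iθ}], [-(b̄/ā) e^{2iθ}, 1/(a ā)]], J₂ = [[a/ᾱ, 0], [-δ̄ e^{2iθ}, ᾱ/a]], J₃ = [[1/(α ᾱ), (β/ᾱ) e^{-2iθ}], [-(β̄/α) e^{2iθ}, 1]], J₄ = [[ā/α, δ e^{-2iθ}], [0, α/ā]] are defined (all denominators nonzero), where α = ā A - b̄ B, β = a B - b A, δ = ā β + b α, a ā - b b̄ = 1, A Ā - B B̄ = 1, with f̄ := conj(f) evaluated at the real point λ. Then J₁ = J₄ J₃⁻¹ J₂ (equivalently J₃ = J₂ J₁⁻¹ J₄). -/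

import Mathlib

set_option maxHeartbeats 2000000

open Complex ComplexConjugate Matrix

/-- with the stated symmetries and determinant relations at a fixed real point,
`J₁ = J₄ J₃⁻¹ J₂`. -/
theorem jump_matrix_factorization (θ : ℝ) (a b A B α β δ : ℂ)
    (ha : a ≠ 0) (ha' : conj a ≠ 0) (hα : α ≠ 0) (hα' : conj α ≠ 0)
    (hdet1 : a * conj a - b * conj b = 1)
    (hdet2 : A * conj A - B * conj B = 1)
    (hαdef : α = conj a * A - conj b * B)
    (hβdef : β = a * B - b * A)
    (hδdef : δ = conj a * β + b * α) :
    (!![1, b / a * Complex.exp (-(2 * Complex.I * θ));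
        -(conj b / conj a) * Complex.exp (2 * Complex.I * θ),
        1 / (a * conj a)] : Matrix (Fin 2) (Fin 2) ℂ)
      = !![conj a / α, δ * Complex.exp (-(2 * Complex.I * θ)); 0, α / conj a] *
        (!![1 / (α * conj α), β / conj α * Complex.exp (-(2 * Complex.I * θ));
            -(conj β / α) * Complex.exp (2 * Complex.I * θ), 1] : Matrix (Fin 2) (Fin 2) ℂ)⁻¹ *
        !![a / conj α, 0; -(conj δ) * Complex.exp (2 * Complex.I * θ), conj α / a] := by
  have hα2 : conj α = a * conj A - b * conj B := by
    rw [hαdef]; simp only [map_sub, _root_.map_mul, Complex.conj_conj]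
  have hβ2 : conj β = conj a * conj B - conj b * conj A := by
    rw [hβdef]; simp only [map_sub, _root_.map_mul]
  have hδ2 : conj δ = a * conj β + conj b * conj α := by
    rw [hδdef]; simp only [map_add, _root_.map_mul, Complex.conj_conj]
  set e := Complex.exp (2 * Complex.I * θ) with he
  set e' := Complex.exp (-(2 * Complex.I * θ)) with he'
  have hee : e' * e = 1 := by
    rw [he, he', ← Complex.exp_add]; ring_nf; simp
  have hkey : β * conj β = α * conj α - 1 := by
    rw [hβ2, hβdef, hα2, hαdef]
    linear_combination (-(A * conj A - B * conj B)) * hdet1 - hdet2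
  have hinv : (!![1 / (α * conj α), β / conj α * e';
      -(conj β / α) * e, 1] : Matrix (Fin 2) (Fin 2) ℂ)⁻¹
      = !![1, -(β / conj α) * e'; conj β / α * e, 1 / (α * conj α)] := by
    apply Matrix.inv_eq_right_inv
    ext i j
    fin_cases i <;> fin_cases j <;>
      simp [Matrix.mul_apply, Fin.sum_univ_two] <;> field_simp
    · linear_combination β * conj β * hee + hkey
    · ring
    · linear_combination β * conj β * hee + hkey
  have h3 : a * δ * conj β - b * α * conj δ = α * conj α - a * conj a := by
    linear_combination a * conj β * hδdef - b * α * hδ2 + a * conj a * hkey + α * conj α * hdet1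
  rw [hinv, Matrix.mul_fin_two, Matrix.mul_fin_two]
  ext i j
  fin_cases i <;> fin_cases j <;>
    simp only [Matrix.cons_val', Matrix.cons_val_zero, Matrix.cons_val_one,
      Matrix.head_cons, Matrix.head_fin_const, Matrix.empty_val',
      Matrix.cons_val_fin_one, Matrix.of_apply, Fin.isValue, Fin.zero_eta, Fin.mk_one] <;> field_simp
  · linear_combination ((-(a * δ * conj β) + (δ - conj a * β) * conj δ)) * hee
      + (conj δ) * hδdef - h3
  · linear_combination (-e') * hδdef
  · linear_combination e * hδ2
  · ring
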